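/- arXiv:2404.07881 — 2 statements merged into one kernel-verified Lean document; each statement's English description precedes it below -/
import Mathlib

section
/- Suppose A satisfies the matrix model. Then for every proper Fourier diagram α other than the singleton root and every i ∈ [n], E[Z_{α,i}] = 0 and E[Z_{α,i}²] = |Aut(α)| · (n−1)(n−2)⋯(n−|V(α)|+1) / n^{|E(α)|}. -/
set_option linter.unusedVariables false

open scoped Classical BigOperators

noncomputable section

/-! ### Fourier diagrams

A Fourier diagram is a finite rooted multigraph, possibly carrying additional
"2-labeled" edges (`edges2`).  A plain (unlabeled) Fourier diagram is one with
`edges2 = 0`. -/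

structure Diagram where
  V : Type
  fintypeV : Fintype V
  decEqV : DecidableEq V
  root : V
  edges : Multiset (Sym2 V)
  edges2 : Multiset (Sym2 V)

attribute [instance] Diagram.fintypeV Diagram.decEqV

/-- Symmetrized evaluation of a matrix entry on an unordered pair (agrees with
`A (φ a) (φ b)` whenever `A` is symmetric). -/
def sym2val {V : Type} {N : ℕ} (A : Matrix (Fin N) (Fin N) ℝ) (φ : V → Fin N) : Sym2 V → ℝ :=
  Sym2.lift ⟨fun a b => (A (φ a) (φ b) + A (φ b) (φ a)) / 2, fun a b => by ring⟩

/-- Entry `i` of the vector `Z_α`: the sum over injective embeddings `φ` of the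
vertices with `φ(root) = i` of the product of matrix entries over the edges
(a 2-labeled edge contributes `A² - 1/N`). -/
def Zv {N : ℕ} (A : Matrix (Fin N) (Fin N) ℝ) (α : Diagram) (i : Fin N) : ℝ :=
  ∑ φ : α.V → Fin N,
    if Function.Injective φ ∧ φ α.root = i then
      (α.edges.map (sym2val A φ)).prod *
        (α.edges2.map fun e => sym2val A φ e ^ 2 - 1 / (N : ℝ)).prod
    else 0

namespace Diagram

/-- All edges, with 2-labeled edges counted once. -/
def allE (α : Diagram) : Multiset (Sym2 α.V) := α.edges + α.edges2

/-- No vertex other than the root is isolated. -/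
def NoIsolated (α : Diagram) : Prop := ∀ v : α.V, v ≠ α.root → ∃ e ∈ α.allE, v ∈ e

/-- `|E(α)|`, counting 2-labeled edges twice. -/
def nE (α : Diagram) : ℕ := Multiset.card α.edges + 2 * Multiset.card α.edges2

/-- `I(α)`: non-root vertices all of whose incident edges have multiplicity `≥ 2`
or are self-loops (2-labeled edges being treated as single ordinary edges). -/
def I (α : Diagram) : Finset α.V :=
  Finset.univ.filter fun v =>
    v ≠ α.root ∧ ∀ e ∈ α.allE, v ∈ e → (2 ≤ α.allE.count e ∨ e.IsDiag)

/-- The combinatorial quantity `|V(α)| - 1 - |E(α)| + |I(α)|`. -/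
def Dval (α : Diagram) : ℤ :=
  (Fintype.card α.V : ℤ) - 1 - (α.nE : ℤ) + (α.I.card : ℤ)

/-- The underlying simple graph of a diagram. -/
def graph (α : Diagram) : SimpleGraph α.V := SimpleGraph.fromEdgeSet {e | e ∈ α.allE}

/-- Connectivity of the diagram (as a multigraph). -/
def Conn (α : Diagram) : Prop := α.graph.Connected

/-- A proper diagram: no repeated edges, no self-loops and no 2-labeled edges. -/
def Proper (α : Diagram) : Prop :=
  α.edges.Nodup ∧ (∀ e ∈ α.edges, ¬ e.IsDiag) ∧ α.edges2 = 0

/-- A (rooted) tree diagram: an element of `𝒯`. -/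
def IsTree (α : Diagram) : Prop := α.Proper ∧ α.graph.Connected ∧ α.graph.IsAcyclic

/-- Degree of the root (as a multigraph). -/
def rootDeg (α : Diagram) : ℕ := Multiset.card (α.edges.filter fun e => α.root ∈ e)

/-- Membership in `𝒮`: a rooted tree whose root has degree exactly 1. -/
def InS (α : Diagram) : Prop := α.IsTree ∧ α.rootDeg = 1

/-- The root has degree exactly one, with (unique) neighbour `c`. -/
def RootDeg1 (α : Diagram) : Prop :=
  ∃ c : α.V, c ≠ α.root ∧ α.edges.filter (fun e => α.root ∈ e) = {s(α.root, c)}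

end Diagram

/-- Isomorphism of rooted diagrams. -/
def DiagIso (α β : Diagram) : Prop :=
  ∃ g : α.V ≃ β.V, g α.root = β.root ∧ α.edges.map (Sym2.map ⇑g) = β.edges ∧
    α.edges2.map (Sym2.map ⇑g) = β.edges2

/-- `|Aut(α)|`: the number of root-fixing automorphisms of `α`. -/
def autCard (α : Diagram) : ℕ :=
  Nat.card {g : Equiv.Perm α.V // g α.root = α.root ∧
    α.edges.map (Sym2.map ⇑g) = α.edges ∧ α.edges2.map (Sym2.map ⇑g) = α.edges2}

/-! ### Combinatorial negligibility and asymptotic equality `≐` -/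

/-- `a = Θ(n^{-j/2})`. -/
def IsThetaHalf (a : ℕ → ℝ) (j : ℕ) : Prop :=
  ∃ c₁ c₂ : ℝ, 0 < c₁ ∧ 0 < c₂ ∧ ∀ n : ℕ, 1 ≤ n →
    c₁ * (n : ℝ) ^ (-(j : ℝ) / 2) ≤ |a n| ∧ |a n| ≤ c₂ * (n : ℝ) ^ (-(j : ℝ) / 2)

/-- The term `a_n · Z_α` is combinatorially negligible. -/
def NegligibleTerm (a : ℕ → ℝ) (α : Diagram) : Prop :=
  (∀ n, a n = 0) ∨ ∃ j : ℕ, IsThetaHalf a j ∧ α.Dval ≤ (j : ℤ) - 1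

/-- The term `a_n · Z_α` has combinatorial order 1. -/
def Order1Term (a : ℕ → ℝ) (α : Diagram) : Prop :=
  ∃ j : ℕ, IsThetaHalf a j ∧ α.Dval = (j : ℤ)

/-- A (vector-valued) diagram expression: a finite sum of terms `a_n · Z_α`. -/
abbrev DiagExpr : Type 1 := List ((ℕ → ℝ) × Diagram)

def DiagExpr.eval (z : DiagExpr) {N : ℕ} (A : Matrix (Fin N) (Fin N) ℝ) (i : Fin N) : ℝ :=
  (z.map fun p => p.1 N * Zv A p.2 i).sum

def DiagExpr.Negligible (z : DiagExpr) : Prop := ∀ p ∈ z, NegligibleTerm p.1 p.2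

/-- Asymptotic equality `x ≐ y` of two vector-valued quantities: the difference is
(identically, for every symmetric input matrix) a sum of combinatorially
negligible diagram terms. -/
def AsympEqV (x y : (N : ℕ) → Matrix (Fin N) (Fin N) ℝ → Fin N → ℝ) : Prop :=
  ∃ z : DiagExpr, DiagExpr.Negligible z ∧
    ∀ (N : ℕ) (A : Matrix (Fin N) (Fin N) ℝ), A.IsSymm → ∀ i : Fin N,
      x N A i - y N A i = DiagExpr.eval z A i

/-- `≐` for diagram expressions. -/
def AsympEqE (x y : DiagExpr) : Prop :=
  AsympEqV (fun _ A i => DiagExpr.eval x A i) (fun _ A i => DiagExpr.eval y A i)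

/-! ### Scalar diagrams -/

structure SDiagram where
  V : Type
  fintypeV : Fintype V
  decEqV : DecidableEq V
  edges : Multiset (Sym2 V)
  edges2 : Multiset (Sym2 V)

attribute [instance] SDiagram.fintypeV SDiagram.decEqV

def Zs {N : ℕ} (A : Matrix (Fin N) (Fin N) ℝ) (α : SDiagram) : ℝ :=
  ∑ φ : α.V → Fin N,
    if Function.Injective φ then
      (α.edges.map (sym2val A φ)).prod *
        (α.edges2.map fun e => sym2val A φ e ^ 2 - 1 / (N : ℝ)).prod
    else 0

namespace SDiagram

def allE (α : SDiagram) : Multiset (Sym2 α.V) := α.edges + α.edges2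
def NoIsolated (α : SDiagram) : Prop := ∀ v : α.V, ∃ e ∈ α.allE, v ∈ e
def nE (α : SDiagram) : ℕ := Multiset.card α.edges + 2 * Multiset.card α.edges2
def I (α : SDiagram) : Finset α.V :=
  Finset.univ.filter fun v => ∀ e ∈ α.allE, v ∈ e → (2 ≤ α.allE.count e ∨ e.IsDiag)
def Dval (α : SDiagram) : ℤ := (Fintype.card α.V : ℤ) - (α.nE : ℤ) + (α.I.card : ℤ)
def graph (α : SDiagram) : SimpleGraph α.V := SimpleGraph.fromEdgeSet {e | e ∈ α.allE}
def Proper (α : SDiagram) : Prop :=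
  α.edges.Nodup ∧ (∀ e ∈ α.edges, ¬ e.IsDiag) ∧ α.edges2 = 0
def IsTree (α : SDiagram) : Prop := α.Proper ∧ α.graph.Connected ∧ α.graph.IsAcyclic

end SDiagram

def SDiagIso (α β : SDiagram) : Prop :=
  ∃ g : α.V ≃ β.V, α.edges.map (Sym2.map ⇑g) = β.edges ∧
    α.edges2.map (Sym2.map ⇑g) = β.edges2

def autCardS (α : SDiagram) : ℕ :=
  Nat.card {g : Equiv.Perm α.V //
    α.edges.map (Sym2.map ⇑g) = α.edges ∧ α.edges2.map (Sym2.map ⇑g) = α.edges2}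

def NegligibleTermS (a : ℕ → ℝ) (α : SDiagram) : Prop :=
  (∀ n, a n = 0) ∨ ∃ j : ℕ, IsThetaHalf a j ∧ α.Dval ≤ (j : ℤ) - 1

abbrev SDiagExpr : Type 1 := List ((ℕ → ℝ) × SDiagram)

def SDiagExpr.eval (z : SDiagExpr) {N : ℕ} (A : Matrix (Fin N) (Fin N) ℝ) : ℝ :=
  (z.map fun p => p.1 N * Zs A p.2).sum

def SDiagExpr.Negligible (z : SDiagExpr) : Prop := ∀ p ∈ z, NegligibleTermS p.1 p.2

/-- Asymptotic equality `x ≐ y` of two scalar quantities. -/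
def AsympEqS (x y : (N : ℕ) → Matrix (Fin N) (Fin N) ℝ → ℝ) : Prop :=
  ∃ z : SDiagExpr, SDiagExpr.Negligible z ∧
    ∀ (N : ℕ) (A : Matrix (Fin N) (Fin N) ℝ), A.IsSymm → x N A - y N A = SDiagExpr.eval z A

/-! ### The Wigner matrix model -/

/-- Subgaussian distribution on `ℝ` (definition from the paper). -/
def Subgaussian (μ : MeasureTheory.Measure ℝ) : Prop :=
  ∃ C : ℝ, 0 < C ∧ ∀ q : ℕ, ∫ x, |x| ^ q ∂μ ≤ C ^ q * (q : ℝ) ^ ((q : ℝ) / 2)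

/-- The matrix model: `A(n)` is a random symmetric `n × n` matrix whose entries are
independent up to symmetry, with `√n · A_{ii} ~ μ₀` and `√n · A_{ij} ~ μ` (`i ≠ j`),
where `μ, μ₀` are subgaussian, centered, and `μ` has unit variance. -/
structure MatrixModel where
  Ω : Type
  [mΩ : MeasurableSpace Ω]
  P : MeasureTheory.Measure Ω
  [probP : MeasureTheory.IsProbabilityMeasure P]
  μ : MeasureTheory.Measure ℝ
  μ₀ : MeasureTheory.Measure ℝ
  [probμ : MeasureTheory.IsProbabilityMeasure μ]
  [probμ₀ : MeasureTheory.IsProbabilityMeasure μ₀]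
  subgμ : Subgaussian μ
  subgμ₀ : Subgaussian μ₀
  mean_zero : ∫ x, x ∂μ = 0
  mean_zero₀ : ∫ x, x ∂μ₀ = 0
  var_one : ∫ x, x ^ 2 ∂μ = 1
  A : (n : ℕ) → Ω → Matrix (Fin n) (Fin n) ℝ
  meas : ∀ (n : ℕ) (i j : Fin n), Measurable fun ω => A n ω i j
  symm : ∀ (n : ℕ) (ω : Ω), (A n ω).IsSymm
  indep : ∀ n : ℕ, ProbabilityTheory.iIndepFun
    (fun (p : {p : Fin n × Fin n // p.1 ≤ p.2}) (ω : Ω) => A n ω p.1.1 p.1.2) P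
  dist_diag : ∀ (n : ℕ) (i : Fin n),
    MeasureTheory.Measure.map (fun ω => Real.sqrt n * A n ω i i) P = μ₀
  dist_off : ∀ (n : ℕ) (i j : Fin n), i ≠ j →
    MeasureTheory.Measure.map (fun ω => Real.sqrt n * A n ω i j) P = μ

attribute [instance] MatrixModel.mΩ MatrixModel.probP MatrixModel.probμ MatrixModel.probμ₀

open MeasureTheory ProbabilityTheory Filter

/-! ### Branches of trees, Hermite polynomials, and the asymptotic Gaussian space -/

/-- The diagram's graph with all edges incident to the root removed. -/
def Diagram.offRoot (α : Diagram) : SimpleGraph α.V := α.graph.deleteEdges {e | α.root ∈ e}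

/-- The set of vertices belonging to the branch hanging at a root-neighbour `c`. -/
def Diagram.branchSet (α : Diagram) (c : α.V) : Set α.V := {v | α.offRoot.Reachable c v}

/-- The branch of `α` at a root-neighbour `c`, as a rooted diagram (the root is kept). -/
def Diagram.branchAt (α : Diagram) (c : α.V) : Diagram where
  V := {v : α.V // v = α.root ∨ v ∈ α.branchSet c}
  fintypeV := Fintype.ofFinite _
  decEqV := inferInstance
  root := ⟨α.root, Or.inl rfl⟩
  edges := (α.edges.filter fun e => ∃ v, v ∈ e ∧ v ∈ α.branchSet c).map
    (Sym2.map fun v =>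
      if h : v = α.root ∨ v ∈ α.branchSet c then
        (⟨v, h⟩ : {v : α.V // v = α.root ∨ v ∈ α.branchSet c})
      else ⟨α.root, Or.inl rfl⟩)
  edges2 := (α.edges2.filter fun e => ∃ v, v ∈ e ∧ v ∈ α.branchSet c).map
    (Sym2.map fun v =>
      if h : v = α.root ∨ v ∈ α.branchSet c then
        (⟨v, h⟩ : {v : α.V // v = α.root ∨ v ∈ α.branchSet c})
      else ⟨α.root, Or.inl rfl⟩)

/-- `d_σ(τ)`: the number of branches of the root of `τ` isomorphic to `σ ∈ 𝒮`. -/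
def dcount (τ σ : Diagram) : ℕ :=
  Nat.card {c : τ.V // τ.graph.Adj τ.root c ∧ DiagIso (τ.branchAt c) σ}

/-- The monic orthogonal (generalized Hermite) polynomials for `N(0, v)`:
`h_0 = 1`, `h_1 = x`, `h_{k+2} = x·h_{k+1} - v·(k+1)·h_k`. -/
def hermiteVar (v : ℝ) : ℕ → ℝ → ℝ
  | 0, _ => 1
  | 1, x => x
  | k + 2, x => x * hermiteVar v (k + 1) x - v * ((k : ℝ) + 1) * hermiteVar v k x

/-- Given an enumeration `rep` of representatives of the isomorphism classes of `𝒮`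
and a family `G` of corresponding (Gaussian) random variables, the asymptotic random
variable `Z_τ^∞ = ∏_σ h_{d_σ(τ)}(Z_σ^∞; |Aut σ|)` attached to a rooted tree `τ ∈ 𝒯`. -/
def ZinfTree {Ω' : Type} (rep : ℕ → Diagram) (G : ℕ → Ω' → ℝ) (τ : Diagram) (ω : Ω') : ℝ :=
  ∏ᶠ m : ℕ, hermiteVar (autCard (rep m)) (dcount τ (rep m)) (G m ω)

/-- `τ⁺`: extend the root by one edge. -/
def plusD (τ : Diagram) : Diagram where
  V := Option τ.V
  fintypeV := inferInstance
  decEqV := inferInstance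
  root := none
  edges := τ.edges.map (Sym2.map fun v => (some v : Option τ.V)) +
    {s((none : Option τ.V), some τ.root)}
  edges2 := τ.edges2.map (Sym2.map fun v => (some v : Option τ.V))

/-- `σ⁻` for a root of degree 1 with neighbour `c`: delete the root and its unique
edge, re-rooting at `c`. -/
def minusDAux (τ : Diagram) (c : τ.V) (hc : c ≠ τ.root) : Diagram where
  V := {v : τ.V // v ≠ τ.root}
  fintypeV := Fintype.ofFinite _
  decEqV := inferInstance
  root := ⟨c, hc⟩
  edges := (τ.edges.filter fun e => τ.root ∉ e).map
    (Sym2.map fun v => if h : v = τ.root then (⟨c, hc⟩ : {v : τ.V // v ≠ τ.root}) else ⟨v, h⟩)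
  edges2 := (τ.edges2.filter fun e => τ.root ∉ e).map
    (Sym2.map fun v => if h : v = τ.root then (⟨c, hc⟩ : {v : τ.V // v ≠ τ.root}) else ⟨v, h⟩)

/-- `τ⁻` (total version; meaningful when the root has degree exactly one). -/
def minusD (τ : Diagram) : Diagram :=
  if h : τ.RootDeg1 then minusDAux τ h.choose h.choose_spec.1 else τ

/-! ### Removal of hanging double edges -/

/-- Remove a hanging double edge `{u, v}` (where `v` is a hanging non-root vertex)
together with the vertex `v`. -/
def rmHDE (α : Diagram) (u v : α.V) (huv : u ≠ v) (hv : v ≠ α.root) : Diagram where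
  V := {w : α.V // w ≠ v}
  fintypeV := Fintype.ofFinite _
  decEqV := inferInstance
  root := ⟨α.root, fun h => hv h.symm⟩
  edges := (α.edges - Multiset.replicate 2 s(u, v)).map
    (Sym2.map fun w => if h : w = v then (⟨u, huv⟩ : {w : α.V // w ≠ v}) else ⟨w, h⟩)
  edges2 := α.edges2.map
    (Sym2.map fun w => if h : w = v then (⟨u, huv⟩ : {w : α.V // w ≠ v}) else ⟨w, h⟩)

/-- Replace a hanging double edge `{u, v}` by a single 2-labeled edge. -/
def relabelHDE (α : Diagram) (u v : α.V) : Diagram :=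
  { α with edges := α.edges - Multiset.replicate 2 s(u, v), edges2 := α.edges2 + {s(u, v)} }

/-- One step of deleting a hanging double edge (up to isomorphism). -/
def StepRemove (α β : Diagram) : Prop :=
  ∃ (u v : α.V) (huv : u ≠ v) (hv : v ≠ α.root),
    α.edges.count s(u, v) = 2 ∧ (∀ e ∈ α.edges, v ∈ e → e = s(u, v)) ∧
    (∀ e ∈ α.edges2, v ∉ e) ∧ DiagIso β (rmHDE α u v huv hv)

/-- The asymptotic random variable `Z_α^∞` of a connected diagram `α`: if repeatedly
deleting hanging double edges transforms `α` into a rooted tree `τ ∈ 𝒯` then it is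
`Z_τ^∞`, and otherwise it is `0`. -/
def ZinfGen {Ω' : Type} (rep : ℕ → Diagram) (G : ℕ → Ω' → ℝ) (α : Diagram) : Ω' → ℝ :=
  if h : ∃ τ : Diagram, Relation.ReflTransGen StepRemove α τ ∧ τ.IsTree then
    ZinfTree rep G h.choose
  else fun _ => 0

/-! ### Tree expressions -/

/-- A tree(-diagram) expression with coefficients independent of `n`. -/
abbrev TreeExpr : Type 1 := List (ℝ × Diagram)

def TreeExpr.eval (x : TreeExpr) {N : ℕ} (A : Matrix (Fin N) (Fin N) ℝ) (i : Fin N) : ℝ :=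
  (x.map fun p => p.1 * Zv A p.2 i).sum

/-- The asymptotic state attached to a tree expression. -/
def TreeExpr.inf {Ω' : Type} (rep : ℕ → Diagram) (G : ℕ → Ω' → ℝ) (x : TreeExpr) (ω : Ω') : ℝ :=
  (x.map fun p => p.1 * ZinfTree rep G p.2 ω).sum

/-- The linear operator `⁺` on tree expressions. -/
def TreeExpr.plusE (x : TreeExpr) : TreeExpr := x.map fun p => (p.1, plusD p.2)

/-- The linear operator `⁻` on tree expressions (trees whose root does not have
degree one are sent to `0`). -/
def TreeExpr.minusE (x : TreeExpr) : TreeExpr :=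
  x.flatMap fun p =>
    if h : p.2.RootDeg1 then [(p.1, minusDAux p.2 h.choose h.choose_spec.1)] else []

/-- The asymptotic Gaussian space: an enumeration `rep` of pairwise non-isomorphic
representatives of all isomorphism classes of `𝒮`, together with a family `G m i`
(`m` = class, `i` = coordinate) of independent centered Gaussians with variances
`|Aut(rep m)|`. -/
structure SRep {Ω' : Type} [MeasurableSpace Ω'] (P' : Measure Ω') (rep : ℕ → Diagram)
    (G : ℕ → ℕ → Ω' → ℝ) : Prop where
  mem : ∀ m, (rep m).InS
  pairwise : ∀ m m', m ≠ m' → ¬ DiagIso (rep m) (rep m')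
  complete : ∀ σ : Diagram, σ.InS → ∃ m, DiagIso σ (rep m)
  meas : ∀ m i, Measurable (G m i)
  dist : ∀ m i, Measure.map (G m i) P' = gaussianReal 0 (autCard (rep m) : NNReal)
  indep : iIndepFun (fun p : ℕ × ℕ => G p.1 p.2) P'

/-- As `SRep`, with a single coordinate. -/
structure SRep1 {Ω' : Type} [MeasurableSpace Ω'] (P' : Measure Ω') (rep : ℕ → Diagram)
    (G : ℕ → Ω' → ℝ) : Prop where
  mem : ∀ m, (rep m).InS
  pairwise : ∀ m m', m ≠ m' → ¬ DiagIso (rep m) (rep m')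
  complete : ∀ σ : Diagram, σ.InS → ∃ m, DiagIso σ (rep m)
  meas : ∀ m, Measurable (G m)
  dist : ∀ m, Measure.map (G m) P' = gaussianReal 0 (autCard (rep m) : NNReal)
  indep : iIndepFun G P'

/-! ### Products of tree diagrams by matchings of branches -/

/-- Index type of the branches of a family of rooted trees. -/
abbrev BIdx {q : ℕ} (τ : Fin q → Diagram) : Type := Σ j : Fin q, (τ j).V

/-- A partial matching of pairwise-isomorphic root-branches of `τ 0, …, τ (q-1)` with
no two matched branches from the same tree. -/
def IsBMatch {q : ℕ} (τ : Fin q → Diagram) (M : Finset (Sym2 (BIdx τ))) : Prop :=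
  (∀ p ∈ M, ¬ p.IsDiag) ∧
  (∀ p ∈ M, ∀ p' ∈ M, p ≠ p' → ∀ b : BIdx τ, b ∈ p → b ∉ p') ∧
  (∀ b b' : BIdx τ, s(b, b') ∈ M →
    b.1 ≠ b'.1 ∧ (τ b.1).graph.Adj (τ b.1).root b.2 ∧ (τ b'.1).graph.Adj (τ b'.1).root b'.2 ∧
      DiagIso ((τ b.1).branchAt b.2) ((τ b'.1).branchAt b'.2))

/-- `|Aut(σ)|` for a matched pair of isomorphic branches. -/
def pairAut {q : ℕ} (τ : Fin q → Diagram) : Sym2 (BIdx τ) → ℕ :=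
  Sym2.lift ⟨fun b b' => max (autCard ((τ b.1).branchAt b.2)) (autCard ((τ b'.1).branchAt b'.2)),
    fun b b' => max_comm _ _⟩

def matchCoeff {q : ℕ} (τ : Fin q → Diagram) (M : Finset (Sym2 (BIdx τ))) : ℝ :=
  ∏ p ∈ M, (pairAut τ p : ℝ)

/-- A vertex belonging to a matched (hence deleted) branch. -/
def BDeleted {q : ℕ} (τ : Fin q → Diagram) (M : Finset (Sym2 (BIdx τ))) (v : BIdx τ) : Prop :=
  ∃ p ∈ M, ∃ c : (τ v.1).V, (⟨v.1, c⟩ : BIdx τ) ∈ p ∧ v.2 ∈ (τ v.1).branchSet c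

/-- `τ_M`: merge the roots of `τ 0, …, τ (q-1)` and delete all branches matched in `M`. -/
def mergedTree {q : ℕ} (τ : Fin q → Diagram) (M : Finset (Sym2 (BIdx τ))) : Diagram where
  V := Option {v : BIdx τ // v.2 ≠ (τ v.1).root ∧ ¬ BDeleted τ M v}
  fintypeV := Fintype.ofFinite _
  decEqV := inferInstance
  root := none
  edges := (Finset.univ : Finset (Fin q)).val.bind fun j =>
    ((τ j).edges.filter fun e => ∀ w, w ∈ e → w = (τ j).root ∨ ¬ BDeleted τ M ⟨j, w⟩).map
      (Sym2.map fun w =>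
        if h : w ≠ (τ j).root ∧ ¬ BDeleted τ M ⟨j, w⟩ then
          (some ⟨⟨j, w⟩, h⟩ : Option {v : BIdx τ // v.2 ≠ (τ v.1).root ∧ ¬ BDeleted τ M v})
        else none)
  edges2 := 0

/-- The product of a list of tree diagrams (with coefficients), expanded over all
matchings of isomorphic root-branches. -/
def treeListProd (l : List (ℝ × Diagram)) : TreeExpr :=
  ((Finset.univ : Finset (Finset (Sym2 (BIdx fun j : Fin l.length => (l.get j).2)))).filter
      (IsBMatch fun j : Fin l.length => (l.get j).2)).toList.map
    fun M => ((l.map Prod.fst).prod * matchCoeff _ M, mergedTree _ M)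

def scaleTE (c : ℝ) (x : TreeExpr) : TreeExpr := x.map fun p => (c * p.1, p.2)

/-- Application of a polynomial to tree expressions, expanding each monomial via the
matching-product of tree diagrams. -/
def applyPoly {k : ℕ} (f : MvPolynomial (Fin k) ℝ) (xs : Fin k → TreeExpr) : TreeExpr :=
  f.support.toList.flatMap fun d =>
    (List.sections ((List.finRange k).flatMap fun s => List.replicate (d s) (xs s))).flatMap
      fun choice => scaleTE (MvPolynomial.coeff d f) (treeListProd choice)

/-! ### General first-order methods -/

/-- One step of a GFOM: multiply by `A`, or apply a polynomial of the previous states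
componentwise. -/
inductive GFOMStep : ℕ → Type where
  | matmul : {t : ℕ} → GFOMStep t
  | nonlin : {t : ℕ} → MvPolynomial (Fin (t + 1)) ℝ → GFOMStep t

/-- The state `x_t ∈ ℝⁿ` of a GFOM with input matrix `A`; in a `nonlin` step with
polynomial `f`, coordinate `s` of `f` receives `x_{t-s}`. -/
def gfomState {n : ℕ} (steps : (t : ℕ) → GFOMStep t) (A : Matrix (Fin n) (Fin n) ℝ) :
    ℕ → Fin n → ℝ
  | 0 => fun _ => 1
  | t + 1 =>
    match steps t with
    | GFOMStep.matmul => A.mulVec (gfomState steps A t)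
    | GFOMStep.nonlin f => fun i =>
        MvPolynomial.eval (fun s : Fin (t + 1) => gfomState steps A (t - (s : ℕ)) i) f
  termination_by t => t
  decreasing_by all_goals omega

/-- The singleton diagram (representing the all-ones vector). -/
def singletonD : Diagram where
  V := PUnit
  fintypeV := inferInstance
  decEqV := inferInstance
  root := PUnit.unit
  edges := 0
  edges2 := 0

/-- Multiplication by `A` on the trees: `Z_τ ↦ Z_{τ⁺} (+ Z_{τ⁻}` if `τ ∈ 𝒮)`. -/
def stepMul (x : TreeExpr) : TreeExpr :=
  x.flatMap fun p =>
    (p.1, plusD p.2) ::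
      (if h : p.2.RootDeg1 then [(p.1, minusDAux p.2 h.choose h.choose_spec.1)] else [])

/-- The tree approximation `x̂_t` of a GFOM: the GFOM operations performed on the
tree diagrams only. -/
def hatState (steps : (t : ℕ) → GFOMStep t) : ℕ → TreeExpr
  | 0 => [(1, singletonD)]
  | t + 1 =>
    match steps t with
    | GFOMStep.matmul => stepMul (hatState steps t)
    | GFOMStep.nonlin f => applyPoly f fun s : Fin (t + 1) => hatState steps (t - (s : ℕ))
  termination_by t => t
  decreasing_by all_goals omega

/-! ### Belief propagation and approximate message passing -/

/-- Belief propagation messages `m^t_{i→j}` for the nonlinearities `f`; in `f t`,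
coordinate `s ≤ t-1` receives `∑_{k≠j} A_{ik} m^{t-1-s}_{k→i}`, and the last
coordinate receives `m⁰ = 1`. -/
def bpMsg {n : ℕ} (f : (t : ℕ) → MvPolynomial (Fin (t + 1)) ℝ)
    (A : Matrix (Fin n) (Fin n) ℝ) : ℕ → Fin n → Fin n → ℝ
  | 0 => fun _ _ => 1
  | t + 1 => fun i j =>
      MvPolynomial.eval (fun s : Fin (t + 2) =>
        if (s : ℕ) ≤ t then ∑ k ∈ Finset.univ.erase j, A i k * bpMsg f A (t - (s : ℕ)) k i
        else 1) (f (t + 1))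
  termination_by t => t
  decreasing_by all_goals omega

/-- Belief propagation output `m^t_i`. -/
def bpOut {n : ℕ} (f ftil : (t : ℕ) → MvPolynomial (Fin (t + 1)) ℝ)
    (A : Matrix (Fin n) (Fin n) ℝ) (t : ℕ) (i : Fin n) : ℝ :=
  MvPolynomial.eval (fun s : Fin (t + 1) =>
    if (s : ℕ) < t then ∑ k, A i k * bpMsg f A (t - 1 - (s : ℕ)) k i else 1) (ftil t)

/-- The AMP iterates `w^t` with Onsager correction; in `f t`, coordinate `s`
receives `w^{t-s}`. -/
def ampW {n : ℕ} (f : (t : ℕ) → MvPolynomial (Fin (t + 1)) ℝ)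
    (A : Matrix (Fin n) (Fin n) ℝ) : ℕ → Fin n → ℝ
  | 0 => fun _ => 1
  | t + 1 => fun i =>
      A.mulVec (fun k =>
        MvPolynomial.eval (fun s : Fin (t + 1) => ampW f A (t - (s : ℕ)) k) (f t)) i -
      ∑ s : Fin (t + 1),
        (if 1 ≤ (s : ℕ) then
          ((1 / (n : ℝ)) * ∑ k : Fin n,
            MvPolynomial.eval (fun r : Fin (t + 1) => ampW f A (t - (r : ℕ)) k)
              (MvPolynomial.pderiv (⟨t - (s : ℕ), by omega⟩ : Fin (t + 1)) (f t))) *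
          MvPolynomial.eval
            (fun r : Fin (((s : ℕ) - 1) + 1) => ampW f A (((s : ℕ) - 1) - (r : ℕ)) i)
            (f ((s : ℕ) - 1))
        else 0)
  termination_by t => t
  decreasing_by all_goals omega

/-- The AMP output `m^t = f̃_t(w^t, …, w^0)`. -/
def ampOut {n : ℕ} (f ftil : (t : ℕ) → MvPolynomial (Fin (t + 1)) ℝ)
    (A : Matrix (Fin n) (Fin n) ℝ) (t : ℕ) (i : Fin n) : ℝ :=
  MvPolynomial.eval (fun s : Fin (t + 1) => ampW f A (t - (s : ℕ)) i) (ftil t)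

/-! ### Connected components of scalar diagrams -/

def SDiagram.compSet (ρ : SDiagram) (v : ρ.V) : Set ρ.V := {w | ρ.graph.Reachable v w}

/-- The connected component of `v` in `ρ` is isomorphic to the scalar diagram `τ`. -/
def CompIso (ρ : SDiagram) (v : ρ.V) (τ : SDiagram) : Prop :=
  ∃ ψ : τ.V → ρ.V, Function.Injective ψ ∧ Set.range ψ = ρ.compSet v ∧
    τ.edges.map (Sym2.map ψ) = ρ.edges.filter (fun e => ∀ w ∈ e, w ∈ ρ.compSet v) ∧
    τ.edges2.map (Sym2.map ψ) = ρ.edges2.filter (fun e => ∀ w ∈ e, w ∈ ρ.compSet v)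

/-- The number of connected components of `ρ` isomorphic to `τ`. -/
def compCount (ρ τ : SDiagram) : ℕ :=
  Nat.card {K : ρ.graph.ConnectedComponent //
    ∃ v : ρ.V, ρ.graph.connectedComponentMk v = K ∧ CompIso ρ v τ}

/-- The number of connected components of a scalar diagram. -/
def numComps (ρ : SDiagram) : ℕ := Nat.card ρ.graph.ConnectedComponent

/-! ### Debiased power iteration -/

/-- Debiased power iteration: `x₀ = 1`, `x₁ = A·1`, `x_{t+2} = A·x_{t+1} - x_t`. -/
def dpi {n : ℕ} (A : Matrix (Fin n) (Fin n) ℝ) : ℕ → Fin n → ℝ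
  | 0 => fun _ => 1
  | 1 => A.mulVec fun _ => 1
  | t + 2 => fun i => A.mulVec (dpi A (t + 1)) i - dpi A t i

/-- The path with `t` edges, rooted at one endpoint. -/
def pathD (t : ℕ) : Diagram where
  V := Fin (t + 1)
  fintypeV := inferInstance
  decEqV := inferInstance
  root := 0
  edges := (Finset.univ : Finset (Fin t)).val.map fun k =>
    s((k.castSucc : Fin (t + 1)), (k.succ : Fin (t + 1)))
  edges2 := 0


/-- A term which is combinatorially negligible or of combinatorial order 1. -/
def TermOrderLE1 (p : (ℕ → ℝ) × Diagram) : Prop :=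
  NegligibleTerm p.1 p.2 ∨ Order1Term p.1 p.2


/-! ### Auxiliary lemmas for statement 14 -/

section Statement14Aux

open MeasureTheory ProbabilityTheory

/-- Integral of a product of independent integrable random variables. -/
lemma s14_prod_integral {ι : Type*} {Ω : Type} [MeasurableSpace Ω] {P : Measure Ω}
    [IsProbabilityMeasure P] {f : ι → Ω → ℝ}
    (h : iIndepFun f P) (hm : ∀ p, Measurable (f p)) :
    ∀ T : Finset ι, (∀ p ∈ T, Integrable (f p) P) →
      Integrable (fun ω => ∏ p ∈ T, f p ω) P ∧
        (∫ ω, (∏ p ∈ T, f p ω) ∂P) = ∏ p ∈ T, ∫ ω, f p ω ∂P := by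
  intro T
  induction T using Finset.cons_induction with
  | empty => intro _; exact ⟨by simpa using (integrable_const (1 : ℝ)), by simp⟩
  | cons a T ha ih =>
    intro hint
    obtain ⟨hI, hE⟩ := ih fun p hp => hint p (Finset.mem_cons_of_mem hp)
    have hprod_eq : (∏ j ∈ T, f j) = fun ω => ∏ j ∈ T, f j ω := by
      funext ω; exact Finset.prod_apply ω T f
    have hindep : IndepFun (∏ j ∈ T, f j) (f a) P :=
      h.indepFun_finsetProd_of_notMem hm ha
    have hfa : Integrable (f a) P := hint a (Finset.mem_cons_self a T)
    have hIT : Integrable (∏ j ∈ T, f j) P := by rw [hprod_eq]; exact hI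
    have hmul : Integrable ((∏ j ∈ T, f j) * f a) P := hindep.integrable_mul hIT hfa
    have hfun : (fun ω => ∏ p ∈ Finset.cons a T ha, f p ω) = (∏ j ∈ T, f j) * f a := by
      funext ω
      simp only [Finset.prod_cons, Pi.mul_apply, hprod_eq]
      ring
    refine ⟨by rw [hfun]; exact hmul, ?_⟩
    rw [hfun, hindep.integral_mul_eq_mul_integral hIT.1 hfa.1, Finset.prod_cons]
    have : ∫ ω, (∏ j ∈ T, f j) ω ∂P = ∏ p ∈ T, ∫ ω, f p ω ∂P := by
      rw [hprod_eq] at *; exact hE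
    rw [show (integral P (∏ j ∈ T, f j)) = ∫ ω, (∏ j ∈ T, f j) ω ∂P from rfl, this]
    ring

/-- Sorted-pair index of an element of `Sym2 (Fin n)`. -/
def pairIdx {n : ℕ} : Sym2 (Fin n) → {p : Fin n × Fin n // p.1 ≤ p.2} :=
  Sym2.lift ⟨fun a b => if h : a ≤ b then ⟨(a, b), h⟩ else ⟨(b, a), le_of_not_ge h⟩, by
    intro a b
    dsimp only
    rcases le_or_gt a b with h | h
    · rcases lt_or_eq_of_le h with h' | h'
      · rw [dif_pos h, dif_neg (not_le.mpr h')]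
      · subst h'; simp
    · rw [dif_neg (not_le.mpr h), dif_pos h.le]⟩

lemma pairIdx_spec {n : ℕ} (e : Sym2 (Fin n)) : s((pairIdx e).1.1, (pairIdx e).1.2) = e := by
  induction e using Sym2.ind with
  | _ a b =>
    simp only [pairIdx, Sym2.lift_mk]
    split_ifs <;> simp [Sym2.eq_swap]

lemma pairIdx_injective {n : ℕ} : Function.Injective (pairIdx (n := n)) := by
  intro e e' h
  rw [← pairIdx_spec e, ← pairIdx_spec e', h]

lemma pairIdx_ne {n : ℕ} {e : Sym2 (Fin n)} (he : ¬ e.IsDiag) :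
    (pairIdx e).1.1 ≠ (pairIdx e).1.2 := by
  intro h
  exact he (by rw [← pairIdx_spec e]; exact Sym2.mk_isDiag_iff.mpr h)

lemma s14_sym2val_eq_entry {V : Type} {N : ℕ} {A : Matrix (Fin N) (Fin N) ℝ} (hA : A.IsSymm)
    (φ : V → Fin N) (e : Sym2 V) :
    sym2val A φ e = A (pairIdx (Sym2.map φ e)).1.1 (pairIdx (Sym2.map φ e)).1.2 := by
  induction e using Sym2.ind with
  | _ a b =>
    have hs : A (φ b) (φ a) = A (φ a) (φ b) := hA.apply _ _
    rw [Sym2.map_pair_eq]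
    simp only [sym2val, Sym2.lift_mk, pairIdx]
    split_ifs <;> simp only [hs] <;> ring

/-- Moments of an off-diagonal matrix entry. -/
lemma s14_model_moments (M : MatrixModel) {n : ℕ} (a b : Fin n) (hab : a ≠ b) :
    Integrable (fun ω => M.A n ω a b) M.P ∧
    Integrable (fun ω => (M.A n ω a b) ^ 2) M.P ∧
    (∫ ω, M.A n ω a b ∂M.P) = 0 ∧
    (∫ ω, (M.A n ω a b) ^ 2 ∂M.P) = 1 / (n : ℝ) := by
  have hn : 0 < n := a.pos
  have hn' : (0 : ℝ) < n := by exact_mod_cast hn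
  set s : ℝ := Real.sqrt n with hs_def
  have hs : 0 < s := Real.sqrt_pos.mpr hn'
  have hs2 : s ^ 2 = n := Real.sq_sqrt hn'.le
  set f : M.Ω → ℝ := fun ω => s * M.A n ω a b with hf_def
  have hfmeas : Measurable f := (M.meas n a b).const_mul s
  have hmap : Measure.map f M.P = M.μ := M.dist_off n a b hab
  -- integrability of x and x² w.r.t. μ
  have hint2μ : Integrable (fun x : ℝ => x ^ 2) M.μ := by
    by_contra h
    have hv := M.var_one
    rw [integral_undef h] at hv
    exact zero_ne_one hv
  have hint1μ : Integrable (fun x : ℝ => x) M.μ := by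
    refine (hint2μ.add (integrable_const 1)).mono' measurable_id.aestronglyMeasurable ?_
    filter_upwards with x
    rw [Real.norm_eq_abs, Pi.add_apply]
    nlinarith [sq_nonneg (|x| - 1), sq_abs x, abs_nonneg x]
  -- transfer to P
  have hintf : Integrable f M.P := by
    have h1 : Integrable (fun x : ℝ => x) (Measure.map f M.P) := by rw [hmap]; exact hint1μ
    exact (integrable_map_measure measurable_id.aestronglyMeasurable
      hfmeas.aemeasurable).mp h1
  have hintf2 : Integrable (fun ω => f ω ^ 2) M.P := by
    have h1 : Integrable (fun x : ℝ => x ^ 2) (Measure.map f M.P) := by rw [hmap]; exact hint2μ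
    exact (integrable_map_measure (measurable_id.pow_const 2).aestronglyMeasurable
      hfmeas.aemeasurable).mp h1
  have hEf : ∫ ω, f ω ∂M.P = 0 := by
    have h1 : ∫ x, x ∂(Measure.map f M.P) = ∫ ω, f ω ∂M.P :=
      integral_map hfmeas.aemeasurable measurable_id.aestronglyMeasurable
    rw [← h1, hmap, M.mean_zero]
  have hEf2 : ∫ ω, f ω ^ 2 ∂M.P = 1 := by
    have h1 : ∫ x, x ^ 2 ∂(Measure.map f M.P) = ∫ ω, f ω ^ 2 ∂M.P :=
      integral_map hfmeas.aemeasurable (measurable_id.pow_const 2).aestronglyMeasurable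
    rw [← h1, hmap, M.var_one]
  have hA_eq : (fun ω => M.A n ω a b) = fun ω => s⁻¹ * f ω := by
    funext ω; rw [hf_def]; field_simp
  have hA2_eq : (fun ω => (M.A n ω a b) ^ 2) = fun ω => (n : ℝ)⁻¹ * f ω ^ 2 := by
    funext ω
    rw [hf_def]
    simp only [mul_pow, hs2]
    field_simp
  refine ⟨?_, ?_, ?_, ?_⟩
  · rw [hA_eq]; exact hintf.const_mul _
  · rw [hA2_eq]; exact hintf2.const_mul _
  · rw [hA_eq, integral_const_mul, hEf, mul_zero]
  · rw [hA2_eq, integral_const_mul, hEf2, mul_one, one_div]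

lemma s14_descFactorial_real (n m : ℕ) (hn : 1 ≤ n) :
    (((n - 1).descFactorial m : ℕ) : ℝ) = ∏ k ∈ Finset.range m, ((n : ℝ) - ((k : ℝ) + 1)) := by
  rcases le_or_gt (m + 1) n with h | h
  · rw [Nat.descFactorial_eq_prod_range, Nat.cast_prod]
    refine Finset.prod_congr rfl fun k hk => ?_
    rw [Finset.mem_range] at hk
    have h1 : k ≤ n - 1 := by omega
    rw [Nat.cast_sub h1, Nat.cast_sub hn]
    push_cast
    ring
  · have h1 : (n - 1 : ℕ) < m := by omega
    rw [Nat.descFactorial_eq_zero_iff_lt.mpr h1, Nat.cast_zero]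
    symm
    apply Finset.prod_eq_zero (Finset.mem_range.mpr (show n - 1 < m by omega))
    have : ((n - 1 : ℕ) : ℝ) = (n : ℝ) - 1 := by
      rw [Nat.cast_sub hn]; norm_num
    rw [this]; ring

/-- The number of injective maps sending the root to `i`. -/
lemma s14_card_inj {V : Type} [Fintype V] [DecidableEq V] (root : V) {n : ℕ} (i : Fin n) :
    Nat.card {φ : V → Fin n // Function.Injective φ ∧ φ root = i} =
      (n - 1).descFactorial (Fintype.card V - 1) := by
  classical
  have e : {φ : V → Fin n // Function.Injective φ ∧ φ root = i} ≃
      ({v : V // v ≠ root} ↪ {j : Fin n // j ≠ i}) :=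
    { toFun := fun φ => ⟨fun v => ⟨φ.1 v.1, fun h => v.2 (φ.2.1 (h.trans φ.2.2.symm))⟩,
        fun v w h => Subtype.ext (φ.2.1 (congrArg Subtype.val h))⟩
      invFun := fun f => ⟨fun v => if h : v = root then i else (f ⟨v, h⟩).1, by
        constructor
        · intro v w hvw
          dsimp only at hvw
          by_cases hv : v = root <;> by_cases hw : w = root
          · rw [hv, hw]
          · rw [dif_pos hv, dif_neg hw] at hvw
            exact absurd hvw.symm (f ⟨w, hw⟩).2
          · rw [dif_neg hv, dif_pos hw] at hvw
            exact absurd hvw (f ⟨v, hv⟩).2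
          · rw [dif_neg hv, dif_neg hw] at hvw
            have := f.injective (Subtype.ext hvw)
            exact congrArg Subtype.val this
        · exact dif_pos rfl⟩
      left_inv := fun φ => by
        apply Subtype.ext
        funext v
        by_cases hv : v = root
        · simp only [dif_pos hv]; rw [hv, φ.2.2]
        · simp only [dif_neg hv]; rfl
      right_inv := fun f => by
        apply DFunLike.ext
        intro v
        apply Subtype.ext
        simp only [Function.Embedding.coeFn_mk]
        exact dif_neg v.2 }
  rw [Nat.card_eq_fintype_card, Fintype.card_congr e, Fintype.card_embedding_eq]
  congr 1
  · have h1 : Fintype.card {j : Fin n // ¬ j = i} = n - 1 := by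
      rw [Fintype.card_subtype_compl, Fintype.card_fin, Fintype.card_subtype_eq]
    simpa using h1
  · have h1 : Fintype.card {v : V // ¬ v = root} = Fintype.card V - 1 := by
      rw [Fintype.card_subtype_compl, Fintype.card_subtype_eq]
    simpa using h1

end Statement14Aux

section Statement14Aux2

/-- Counting pairs of injective root-fixing maps with equal edge images. -/
lemma s14_card_pairs (α : Diagram) (hαn : α.NoIsolated) (hα : α.Proper) {n : ℕ} (i : Fin n) :
    Nat.card {q : (α.V → Fin n) × (α.V → Fin n) //
      (Function.Injective q.1 ∧ q.1 α.root = i) ∧ (Function.Injective q.2 ∧ q.2 α.root = i) ∧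
      α.edges.map (Sym2.map q.1) = α.edges.map (Sym2.map q.2)} =
      (n - 1).descFactorial (Fintype.card α.V - 1) * autCard α := by
  classical
  haveI : Nonempty α.V := ⟨α.root⟩
  set Aut := {g : Equiv.Perm α.V // g α.root = α.root ∧
    α.edges.map (Sym2.map ⇑g) = α.edges ∧ α.edges2.map (Sym2.map ⇑g) = α.edges2} with hAut
  set Good := {φ : α.V → Fin n // Function.Injective φ ∧ φ α.root = i} with hGood
  set Pairs := {q : (α.V → Fin n) × (α.V → Fin n) //
      (Function.Injective q.1 ∧ q.1 α.root = i) ∧ (Function.Injective q.2 ∧ q.2 α.root = i) ∧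
      α.edges.map (Sym2.map q.1) = α.edges.map (Sym2.map q.2)} with hPairs
  have hF : ∀ x : Good × Aut, ((Function.Injective (x.1.1 ∘ ⇑x.2.1) ∧
      (x.1.1 ∘ ⇑x.2.1) α.root = i) ∧ α.edges.map (Sym2.map x.1.1) =
      α.edges.map (Sym2.map (x.1.1 ∘ ⇑x.2.1))) := by
    rintro ⟨⟨φ, hinj, hroot⟩, ⟨g, hg1, hg2, _⟩⟩
    dsimp only
    refine ⟨⟨hinj.comp g.injective, ?_⟩, ?_⟩
    · simp only [Function.comp_apply, hg1, hroot]
    · have h4 : α.edges.map (Sym2.map (φ ∘ ⇑g)) =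
          (α.edges.map (Sym2.map ⇑g)).map (Sym2.map φ) := by
        rw [Multiset.map_map]
        exact (Multiset.map_congr rfl fun e _ => (Sym2.map_map e)).symm
      rw [h4, hg2]
  let F : Good × Aut → Pairs := fun x =>
    ⟨(x.1.1, x.1.1 ∘ ⇑x.2.1), ⟨x.1.2, (hF x).1, (hF x).2⟩⟩
  have hbij : Function.Bijective F := by
    constructor
    · rintro ⟨⟨φ, hφ⟩, ⟨g, hg⟩⟩ ⟨⟨φ', hφ'⟩, ⟨g', hg'⟩⟩ h
      have h1 : φ = φ' := congrArg (fun q => q.1.1) h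
      subst h1
      have h2 : φ ∘ ⇑g = φ ∘ ⇑g' := congrArg (fun q => q.1.2) h
      have h3 : g = g' := by
        ext v
        exact hφ.1 (congrFun h2 v)
      subst h3
      rfl
    · rintro ⟨⟨φ, ψ⟩, ⟨hφi, hφr⟩, ⟨hψi, hψr⟩, he⟩
      dsimp only at hφi hφr hψi hψr he
      -- range of ψ is contained in range of φ
      have hrange : ∀ v, ∃ u, φ u = ψ v := by
        intro v
        by_cases hv : v = α.root
        · exact ⟨α.root, by rw [hφr, hv, hψr]⟩
        · obtain ⟨e, hemem, hve⟩ := hαn v hv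
          have hemem' : e ∈ α.edges := by
            have := hemem
            unfold Diagram.allE at this
            rwa [hα.2.2, add_zero] at this
          have h1 : Sym2.map ψ e ∈ α.edges.map (Sym2.map φ) := by
            rw [he]
            exact Multiset.mem_map_of_mem _ hemem'
          obtain ⟨e', _, he'⟩ := Multiset.mem_map.mp h1
          have h2 : ψ v ∈ Sym2.map φ e' := by
            rw [he']
            exact Sym2.mem_map.mpr ⟨v, hve, rfl⟩
          obtain ⟨u, _, hu⟩ := Sym2.mem_map.mp h2
          exact ⟨u, hu⟩
      set g0 : α.V → α.V := fun v => (hrange v).choose with hg0_def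
      have hg0 : ∀ v, φ (g0 v) = ψ v := fun v => (hrange v).choose_spec
      have hg0inj : Function.Injective g0 := by
        intro v w hvw
        exact hψi (by rw [← hg0 v, ← hg0 w, hvw])
      have hφg0 : φ ∘ g0 = ψ := funext hg0
      let g : Equiv.Perm α.V := Equiv.ofBijective g0 (Finite.injective_iff_bijective.mp hg0inj)
      have hgcoe : ⇑g = g0 := rfl
      have hg1 : g α.root = α.root := by
        apply hφi
        rw [hgcoe, hg0, hψr, hφr]
      have hg2 : α.edges.map (Sym2.map ⇑g) = α.edges := by
        apply Multiset.map_injective (Sym2.map.injective hφi)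
        rw [Multiset.map_map, hgcoe]
        have : ∀ e ∈ α.edges, (Sym2.map φ ∘ Sym2.map g0) e = Sym2.map ψ e := by
          intro e _
          simp only [Function.comp_apply, Sym2.map_map]
          exact congrArg (fun f => Sym2.map f e) hφg0
        rw [Multiset.map_congr rfl this, ← he]
      have hg3 : α.edges2.map (Sym2.map ⇑g) = α.edges2 := by
        rw [hα.2.2, Multiset.map_zero]
      refine ⟨⟨⟨φ, hφi, hφr⟩, ⟨g, hg1, hg2, hg3⟩⟩, ?_⟩
      apply Subtype.ext
      simp only [F]
      exact Prod.ext rfl (by rw [hgcoe, hφg0])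
  rw [← Nat.card_eq_of_bijective F hbij, Nat.card_prod, s14_card_inj α.root i]
  rfl

end Statement14Aux2

open MeasureTheory ProbabilityTheory in
/-- mean zero and the exact variance of a proper Fourier diagram. -/
theorem statement_14 (M : MatrixModel) (n : ℕ) (α : Diagram) (hαn : α.NoIsolated)
    (hα : α.Proper) (hsing : α.edges ≠ 0) (i : Fin n) :
    (∫ ω, Zv (M.A n ω) α i ∂M.P) = 0 ∧
    (∫ ω, Zv (M.A n ω) α i ^ 2 ∂M.P) =
      (autCard α : ℝ) *
        (∏ k ∈ Finset.range (Fintype.card α.V - 1), ((n : ℝ) - ((k : ℝ) + 1))) /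
        (n : ℝ) ^ Multiset.card α.edges := by
  classical
  have hn : 0 < n := i.pos
  have hn' : (0 : ℝ) < n := by exact_mod_cast hn
  obtain ⟨hnd, hdiag, h2⟩ := hα
  -- the random entries indexed by sorted pairs
  set X : {p : Fin n × Fin n // p.1 ≤ p.2} → M.Ω → ℝ :=
    fun p ω => M.A n ω p.1.1 p.1.2 with hX_def
  have hXmeas : ∀ p, Measurable (X p) := fun p => M.meas n p.1.1 p.1.2
  have hindep : iIndepFun X M.P := M.indep n
  set mset : (α.V → Fin n) → Multiset {p : Fin n × Fin n // p.1 ≤ p.2} :=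
    fun φ => (α.edges.map (Sym2.map φ)).map pairIdx with hmset_def
  set Pm : Multiset {p : Fin n × Fin n // p.1 ≤ p.2} → M.Ω → ℝ :=
    fun m ω => ((m.map fun p => X p ω).prod) with hPm_def
  set c : (α.V → Fin n) → Prop := fun φ => Function.Injective φ ∧ φ α.root = i with hc_def
  -- basic facts about `mset`
  have hcard_mset : ∀ φ, Multiset.card (mset φ) = Multiset.card α.edges := by
    intro φ; simp [hmset_def]
  have hnd_mset : ∀ φ, Function.Injective φ → ∀ p ∈ mset φ, p.1.1 ≠ p.1.2 := by
    intro φ hinj p hp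
    simp only [hmset_def, Multiset.mem_map] at hp
    obtain ⟨e', ⟨e, he, rfl⟩, rfl⟩ := hp
    exact pairIdx_ne (fun hd => hdiag e he ((Sym2.isDiag_map hinj).mp hd))
  have hnodup_mset : ∀ φ, Function.Injective φ → (mset φ).Nodup := by
    intro φ hinj
    exact Multiset.Nodup.map pairIdx_injective
      (Multiset.Nodup.map (Sym2.map.injective hinj) hnd)
  -- rewriting Zv
  have hPm_eq : ∀ φ ω, (α.edges.map (sym2val (M.A n ω) φ)).prod = Pm (mset φ) ω := by
    intro φ ω
    simp only [hPm_def, hmset_def, Multiset.map_map]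
    congr 1
    refine Multiset.map_congr rfl fun e _ => ?_
    exact s14_sym2val_eq_entry (M.symm n ω) φ e
  have hZv : ∀ ω, Zv (M.A n ω) α i = ∑ φ : α.V → Fin n,
      if c φ then Pm (mset φ) ω else 0 := by
    intro ω
    unfold Zv
    refine Finset.sum_congr rfl fun φ _ => ?_
    rw [h2]
    simp only [Multiset.map_zero, Multiset.prod_zero, mul_one]
    split_ifs with hc
    · exact hPm_eq φ ω
    · rfl
  -- the key integral computation
  have keyM : ∀ m : Multiset {p : Fin n × Fin n // p.1 ≤ p.2},
      (∀ p ∈ m, p.1.1 ≠ p.1.2) → (∀ p, m.count p ≤ 2) →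
      Integrable (fun ω => Pm m ω) M.P ∧
      (∫ ω, Pm m ω ∂M.P) = ∏ p ∈ m.toFinset, ∫ ω, X p ω ^ m.count p ∂M.P := by
    intro m hm hc2
    have hfam : iIndepFun
        (fun p ω => X p ω ^ m.count p) M.P :=
      hindep.comp (fun p x => x ^ m.count p) fun p => measurable_id.pow_const _
    have hint : ∀ p ∈ m.toFinset, Integrable (fun ω => X p ω ^ m.count p) M.P := by
      intro p hp
      have hpm : p ∈ m := Multiset.mem_toFinset.mp hp
      have h1 : 1 ≤ m.count p := Multiset.count_pos.mpr hpm
      obtain mom := s14_model_moments M p.1.1 p.1.2 (hm p hpm)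
      have h12 : m.count p = 1 ∨ m.count p = 2 := by
        have := hc2 p
        omega
      rcases h12 with h | h <;> rw [h]
      · simpa [pow_one] using mom.1
      · exact mom.2.1
    obtain ⟨hI, hE⟩ := s14_prod_integral hfam
      (fun p => (hXmeas p).pow_const _) m.toFinset hint
    have hrw : (fun ω => Pm m ω) = fun ω => ∏ p ∈ m.toFinset, X p ω ^ m.count p := by
      funext ω
      simp only [hPm_def]
      exact Finset.prod_multiset_map_count m _
    constructor
    · rw [hrw]; exact hI
    · rw [hrw] at *; exact hE
  -- integrability of the single terms
  have hterm_int : ∀ φ, Integrable (fun ω => if c φ then Pm (mset φ) ω else 0) M.P := by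
    intro φ
    by_cases hcφ : c φ
    · simp only [if_pos hcφ]
      refine (keyM (mset φ) (hnd_mset φ hcφ.1) fun p => ?_).1
      exact le_trans (Multiset.nodup_iff_count_le_one.mp (hnodup_mset φ hcφ.1) p) one_le_two
    · simp only [if_neg hcφ]
      exact integrable_const 0
  -- ### mean zero
  have hmean : (∫ ω, Zv (M.A n ω) α i ∂M.P) = 0 := by
    have h1 : (∫ ω, Zv (M.A n ω) α i ∂M.P) =
        ∑ φ : α.V → Fin n, ∫ ω, (if c φ then Pm (mset φ) ω else 0) ∂M.P := by
      rw [← integral_finset_sum _ fun φ _ => hterm_int φ]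
      congr 1
      funext ω
      exact hZv ω
    rw [h1]
    refine Finset.sum_eq_zero fun φ _ => ?_
    by_cases hcφ : c φ
    · simp only [if_pos hcφ]
      have hcount : ∀ p, (mset φ).count p ≤ 2 := fun p =>
        le_trans (Multiset.nodup_iff_count_le_one.mp (hnodup_mset φ hcφ.1) p) one_le_two
      rw [(keyM (mset φ) (hnd_mset φ hcφ.1) hcount).2]
      obtain ⟨e, he⟩ := Multiset.exists_mem_of_ne_zero hsing
      have hpmem0 : pairIdx (Sym2.map φ e) ∈ mset φ := by
        simp only [hmset_def, Multiset.map_map]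
        exact Multiset.mem_map_of_mem _ he
      have hpmem : pairIdx (Sym2.map φ e) ∈ (mset φ).toFinset :=
        Multiset.mem_toFinset.mpr hpmem0
      refine Finset.prod_eq_zero hpmem ?_
      rw [Multiset.count_eq_one_of_mem (hnodup_mset φ hcφ.1) hpmem0]
      have hne := hnd_mset φ hcφ.1 _ hpmem0
      simpa [pow_one] using (s14_model_moments M _ _ hne).2.2.1
    · simp [if_neg hcφ]
  refine ⟨hmean, ?_⟩
  -- ### second moment
  have hPm_add : ∀ m m' ω, Pm (m + m') ω = Pm m ω * Pm m' ω := by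
    intro m m' ω
    simp only [hPm_def, Multiset.map_add, Multiset.prod_add]
  have hsq : ∀ ω, Zv (M.A n ω) α i ^ 2 = ∑ φ : α.V → Fin n, ∑ ψ : α.V → Fin n,
      (if c φ ∧ c ψ then Pm (mset φ + mset ψ) ω else 0) := by
    intro ω
    rw [sq, hZv ω, Finset.sum_mul_sum]
    refine Finset.sum_congr rfl fun φ _ => Finset.sum_congr rfl fun ψ _ => ?_
    by_cases h1 : c φ <;> by_cases h2 : c ψ
    · rw [if_pos h1, if_pos h2, if_pos ⟨h1, h2⟩, hPm_add]
    · rw [if_pos h1, if_neg h2, mul_zero, if_neg (fun h => h2 h.2)]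
    · rw [if_neg h1, zero_mul, if_neg (fun h => h1 h.1)]
    · rw [if_neg h1, zero_mul, if_neg (fun h => h1 h.1)]
  -- combined multisets facts
  have hcomb_nd : ∀ φ ψ, c φ → c ψ → ∀ p ∈ mset φ + mset ψ, p.1.1 ≠ p.1.2 := by
    intro φ ψ h1 h2 p hp
    rcases Multiset.mem_add.mp hp with h | h
    · exact hnd_mset φ h1.1 p h
    · exact hnd_mset ψ h2.1 p h
  have hcomb_c2 : ∀ φ ψ, c φ → c ψ → ∀ p, (mset φ + mset ψ).count p ≤ 2 := by
    intro φ ψ h1 h2 p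
    rw [Multiset.count_add]
    have := Multiset.nodup_iff_count_le_one.mp (hnodup_mset φ h1.1) p
    have := Multiset.nodup_iff_count_le_one.mp (hnodup_mset ψ h2.1) p
    omega
  -- value of each pair term
  have hpair : ∀ φ ψ : α.V → Fin n,
      (∫ ω, (if c φ ∧ c ψ then Pm (mset φ + mset ψ) ω else 0) ∂M.P) =
      if c φ ∧ c ψ ∧ α.edges.map (Sym2.map φ) = α.edges.map (Sym2.map ψ) then
        ((n : ℝ)⁻¹) ^ Multiset.card α.edges else 0 := by
    intro φ ψ
    by_cases hc12 : c φ ∧ c ψ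
    · simp only [if_pos hc12]
      rw [(keyM _ (hcomb_nd φ ψ hc12.1 hc12.2) (hcomb_c2 φ ψ hc12.1 hc12.2)).2]
      by_cases heq : α.edges.map (Sym2.map φ) = α.edges.map (Sym2.map ψ)
      · rw [if_pos ⟨hc12.1, hc12.2, heq⟩]
        have hmm : mset φ = mset ψ := by simp only [hmset_def]; rw [heq]
        rw [hmm]
        have hTF : (mset ψ + mset ψ).toFinset = (mset ψ).toFinset := by
          rw [Multiset.toFinset_add, Finset.union_self]
        rw [hTF]
        have hval : ∀ p ∈ (mset ψ).toFinset,
            (∫ ω, X p ω ^ (mset ψ + mset ψ).count p ∂M.P) = (n : ℝ)⁻¹ := by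
          intro p hp
          have hpm : p ∈ mset ψ := Multiset.mem_toFinset.mp hp
          rw [Multiset.count_add,
            Multiset.count_eq_one_of_mem (hnodup_mset ψ hc12.2.1) hpm]
          have := (s14_model_moments M p.1.1 p.1.2 (hnd_mset ψ hc12.2.1 p hpm)).2.2.2
          rw [one_div] at this
          simpa using this
        rw [Finset.prod_congr rfl hval, Finset.prod_const,
          Multiset.toFinset_card_of_nodup (hnodup_mset ψ hc12.2.1), hcard_mset]
      · rw [if_neg (fun h => heq h.2.2)]
        have hne : mset φ ≠ mset ψ := fun h =>
          heq (Multiset.map_injective pairIdx_injective h)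
        obtain ⟨p, hp⟩ : ∃ p, (mset φ).count p ≠ (mset ψ).count p := by
          by_contra h
          push_neg at h
          exact hne (Multiset.ext.mpr h)
        have hφ1 := Multiset.nodup_iff_count_le_one.mp (hnodup_mset φ hc12.1.1) p
        have hψ1 := Multiset.nodup_iff_count_le_one.mp (hnodup_mset ψ hc12.2.1) p
        have hcount1 : (mset φ + mset ψ).count p = 1 := by
          rw [Multiset.count_add]; omega
        have hpm : p ∈ mset φ + mset ψ := by
          rw [← Multiset.count_pos, hcount1]; omega
        refine Finset.prod_eq_zero (Multiset.mem_toFinset.mpr hpm) ?_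
        rw [hcount1]
        have hne' := hcomb_nd φ ψ hc12.1 hc12.2 p hpm
        simpa [pow_one] using (s14_model_moments M p.1.1 p.1.2 hne').2.2.1
    · simp only [if_neg hc12, integral_zero]
      rw [if_neg (fun h => hc12 ⟨h.1, h.2.1⟩)]
  -- integrability of pair terms
  have hpair_int : ∀ φ ψ : α.V → Fin n,
      Integrable (fun ω => if c φ ∧ c ψ then Pm (mset φ + mset ψ) ω else 0) M.P := by
    intro φ ψ
    by_cases hc12 : c φ ∧ c ψ
    · simp only [if_pos hc12]
      exact (keyM _ (hcomb_nd φ ψ hc12.1 hc12.2) (hcomb_c2 φ ψ hc12.1 hc12.2)).1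
    · simp only [if_neg hc12]
      exact integrable_const 0
  -- compute the integral of the square
  have hsq_int : (∫ ω, Zv (M.A n ω) α i ^ 2 ∂M.P) =
      ∑ φ : α.V → Fin n, ∑ ψ : α.V → Fin n,
        ∫ ω, (if c φ ∧ c ψ then Pm (mset φ + mset ψ) ω else 0) ∂M.P := by
    have h1 : (∫ ω, Zv (M.A n ω) α i ^ 2 ∂M.P) =
        ∫ ω, (∑ φ : α.V → Fin n, ∑ ψ : α.V → Fin n,
          if c φ ∧ c ψ then Pm (mset φ + mset ψ) ω else 0) ∂M.P := by
      congr 1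
      funext ω
      exact hsq ω
    rw [h1, integral_finset_sum _ fun φ _ => integrable_finset_sum _ fun ψ _ => hpair_int φ ψ]
    exact Finset.sum_congr rfl fun φ _ =>
      integral_finset_sum _ fun ψ _ => hpair_int φ ψ
  rw [hsq_int]
  have hsum : ∑ φ : α.V → Fin n, ∑ ψ : α.V → Fin n,
      (∫ ω, (if c φ ∧ c ψ then Pm (mset φ + mset ψ) ω else 0) ∂M.P) =
      ((Finset.univ.filter fun q : (α.V → Fin n) × (α.V → Fin n) =>
        (c q.1 ∧ c q.2 ∧ α.edges.map (Sym2.map q.1) = α.edges.map (Sym2.map q.2))).card : ℝ) *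
        ((n : ℝ)⁻¹) ^ Multiset.card α.edges := by
    rw [← Finset.sum_product']
    rw [show ∑ q ∈ Finset.univ ×ˢ Finset.univ,
        (∫ ω, (if c q.1 ∧ c q.2 then Pm (mset q.1 + mset q.2) ω else 0) ∂M.P) =
      ∑ q ∈ Finset.univ ×ˢ Finset.univ,
        (if c q.1 ∧ c q.2 ∧ α.edges.map (Sym2.map q.1) = α.edges.map (Sym2.map q.2) then
          ((n : ℝ)⁻¹) ^ Multiset.card α.edges else 0) from
      Finset.sum_congr rfl fun q _ => hpair q.1 q.2]
    rw [Finset.univ_product_univ, ← Finset.sum_filter, Finset.sum_const, nsmul_eq_mul]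
  rw [hsum]
  -- count the pairs
  have hcount : (Finset.univ.filter fun q : (α.V → Fin n) × (α.V → Fin n) =>
      (c q.1 ∧ c q.2 ∧ α.edges.map (Sym2.map q.1) = α.edges.map (Sym2.map q.2))).card =
      (n - 1).descFactorial (Fintype.card α.V - 1) * autCard α := by
    rw [← Fintype.card_subtype, ← Nat.card_eq_fintype_card]
    exact s14_card_pairs α hαn ⟨hnd, hdiag, h2⟩ i
  rw [hcount]
  rw [Nat.cast_mul, s14_descFactorial_real n (Fintype.card α.V - 1) hn]
  have hnne : (n : ℝ) ^ Multiset.card α.edges ≠ 0 := pow_ne_zero _ hn'.ne'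
  rw [inv_pow]
  field_simp
end
end

section
/- Let M(d,d,d,d) denote the set of perfect matchings on a set of 4d elements partitioned into four blocks of size d each, such that no two elements of the same block are matched to each other. Then there exist constants c > 0 and C > 0 such that for all integers d ≥ 1, |M(d,d,d,d)| ≥ c·d^{−C}·3^d·(d!)². -/
set_option linter.unusedVariables false

open scoped Classical BigOperators

noncomputable section

open MeasureTheory ProbabilityTheory Filter

section Statement19Aux

/-- side of a block: 0 for blocks {0,2}, 1 for blocks {1,3}. -/
def sideF : Fin 4 → Fin 2 := ![0, 1, 0, 1]
def halfF : Fin 4 → Fin 2 := ![0, 0, 1, 1]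
def blkF : Fin 2 → Fin 2 → Fin 4 := ![![0, 2], ![1, 3]]

lemma side_blk1 : ∀ h : Fin 2, sideF (blkF 1 h) = 1 := by decide
lemma side_blk0 : ∀ h : Fin 2, sideF (blkF 0 h) = 0 := by decide
lemma half_blk : ∀ s h : Fin 2, halfF (blkF s h) = h := by decide
lemma blk0_half : ∀ b : Fin 4, sideF b = 0 → blkF 0 (halfF b) = b := by decide
lemma blk1_half : ∀ b : Fin 4, sideF b ≠ 0 → blkF 1 (halfF b) = b := by decide
lemma blk1_inj : ∀ a a' : Fin 2, blkF 1 a = blkF 1 a' → a = a' := by decide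

def gfun (d : ℕ) (F : Equiv.Perm (Fin 2 × Fin d)) (x : Fin 4 × Fin d) : Fin 4 × Fin d :=
  if sideF x.1 = 0 then (blkF 1 (F (halfF x.1, x.2)).1, (F (halfF x.1, x.2)).2)
  else (blkF 0 (F.symm (halfF x.1, x.2)).1, (F.symm (halfF x.1, x.2)).2)

lemma gfun_invol (d : ℕ) (F : Equiv.Perm (Fin 2 × Fin d)) :
    Function.Involutive (gfun d F) := by
  rintro ⟨b, k⟩
  unfold gfun
  by_cases hb : sideF b = 0
  · rw [if_pos hb]
    rw [if_neg (by rw [side_blk1]; exact one_ne_zero)]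
    simp [half_blk, blk0_half b hb]
  · rw [if_neg hb]
    rw [if_pos (side_blk0 _)]
    simp [half_blk, blk1_half b hb]

lemma gfun_fst_ne (d : ℕ) (F : Equiv.Perm (Fin 2 × Fin d)) (x : Fin 4 × Fin d) :
    (gfun d F x).1 ≠ x.1 := by
  unfold gfun
  by_cases hb : sideF x.1 = 0
  · rw [if_pos hb]
    intro h
    have h2 := congrArg sideF h
    rw [side_blk1, hb] at h2
    exact one_ne_zero h2
  · rw [if_neg hb]
    intro h
    have h2 := congrArg sideF h
    rw [side_blk0] at h2
    exact hb h2.symm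

lemma gfun_inj (d : ℕ) : Function.Injective (fun F : Equiv.Perm (Fin 2 × Fin d) => gfun d F) := by
  intro F F' h
  apply Equiv.ext
  rintro ⟨h0, k⟩
  have h1 := congrFun h (blkF 0 h0, k)
  unfold gfun at h1
  dsimp only at h1
  rw [if_pos (side_blk0 h0), if_pos (side_blk0 h0)] at h1
  simp only [half_blk] at h1
  rw [Prod.mk.injEq] at h1
  exact Prod.ext (blk1_inj _ _ h1.1) h1.2

lemma aux_ineq (d : ℕ) (hd : 1 ≤ d) :
    3 ^ d * (Nat.factorial d) ^ 2 ≤ 3 * d * Nat.factorial (2 * d) := by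
  induction d, hd using Nat.le_induction with
  | base => decide
  | succ n hn ih =>
    have h2 : 2 * (n + 1) = (2 * n + 1) + 1 := by ring
    rw [h2, Nat.factorial_succ, Nat.factorial_succ, pow_succ, Nat.factorial_succ]
    calc 3 ^ n * 3 * ((n + 1) * Nat.factorial n) ^ 2
        = 3 * (n + 1) ^ 2 * (3 ^ n * (Nat.factorial n) ^ 2) := by ring
      _ ≤ 3 * (n + 1) ^ 2 * (3 * n * Nat.factorial (2 * n)) :=
          Nat.mul_le_mul_left _ ih
      _ = (9 * n * (n + 1) ^ 2) * Nat.factorial (2 * n) := by ring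
      _ ≤ (3 * (n + 1) * ((2 * n + 1 + 1) * (2 * n + 1))) * Nat.factorial (2 * n) := by
          have h9 : 9 * n * (n + 1) ^ 2 ≤ 3 * (n + 1) * ((2 * n + 1 + 1) * (2 * n + 1)) := by
            nlinarith [sq_nonneg n, hn]
          exact Nat.mul_le_mul_right _ h9
      _ = 3 * (n + 1) * ((2 * n + 1 + 1) * ((2 * n + 1) * Nat.factorial (2 * n))) := by ring

end Statement19Aux

/-- the number of perfect matchings of four blocks of size `d` with no
pair inside a block is at least `c·d^{-C}·3^d·(d!)²`. -/
theorem statement_19 :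
    ∃ c C : ℝ, 0 < c ∧ 0 < C ∧ ∀ d : ℕ, 1 ≤ d →
      c * (d : ℝ) ^ (-C) * 3 ^ d * (Nat.factorial d : ℝ) ^ 2 ≤
        (Nat.card {g : Equiv.Perm (Fin 4 × Fin d) //
            Function.Involutive g ∧ (∀ x, g x ≠ x) ∧ ∀ x, (g x).1 ≠ x.1} : ℝ) := by
  refine ⟨1/3, 1, by norm_num, by norm_num, fun d hd => ?_⟩
  set S := {g : Equiv.Perm (Fin 4 × Fin d) //
      Function.Involutive g ∧ (∀ x, g x ≠ x) ∧ ∀ x, (g x).1 ≠ x.1}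
  have hΦinj : Function.Injective (fun F : Equiv.Perm (Fin 2 × Fin d) =>
      (⟨Function.Involutive.toPerm _ (gfun_invol d F),
        gfun_invol d F,
        fun x hx => gfun_fst_ne d F x (congrArg Prod.fst hx),
        gfun_fst_ne d F⟩ : S)) := by
    intro F F' h
    apply gfun_inj d
    have := congrArg (fun s : S => (s.1 : (Fin 4 × Fin d) → Fin 4 × Fin d)) h
    exact this
  have hcard : Nat.factorial (2 * d) ≤ Nat.card S := by
    have := Nat.card_le_card_of_injective _ hΦinj
    rwa [Nat.card_eq_fintype_card, Fintype.card_perm, Fintype.card_prod,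
      Fintype.card_fin, Fintype.card_fin] at this
  have haux := aux_ineq d hd
  have key : (3 : ℝ) ^ d * (Nat.factorial d : ℝ) ^ 2 ≤ 3 * d * (Nat.card S : ℝ) := by
    have h3 : 3 ^ d * (Nat.factorial d) ^ 2 ≤ 3 * d * Nat.card S :=
      le_trans haux (Nat.mul_le_mul_left _ hcard)
    exact_mod_cast h3
  have hd0 : (0 : ℝ) < d := by exact_mod_cast hd
  have hrp : (d : ℝ) ^ (-(1 : ℝ)) = (d : ℝ)⁻¹ := Real.rpow_neg_one _
  rw [hrp]
  rw [show (1/3 : ℝ) * (d : ℝ)⁻¹ * 3 ^ d * (Nat.factorial d : ℝ) ^ 2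
      = (3 ^ d * (Nat.factorial d : ℝ) ^ 2) / (3 * d) by field_simp]
  rw [div_le_iff₀ (by positivity)]
  nlinarith [key]
end
end
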